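/- In dimension d = 3, for any θ ∈ [0, 2π), the vector φ_θ = (1/√2)(1, e^{iθ}, 0) is a SIC fiducial for the Weyl–Heisenberg group: |⟨φ_θ| D_{jk} |φ_θ⟩|² = 1/4 for all (j,k) ≠ (0,0), j,k ∈ {0,1,2}. -/

import Mathlib

open Matrix BigOperators Finset

/-- The Weyl–Heisenberg displacement operator
D_{jk} = ω^{jk/2} Σ_m ω^{jm} |k⊕m⟩⟨m| on ℂ^d, with ω = exp(2πi/d) and
ω^{jk/2} = exp(πi jk/d); ⊕ is addition mod d (addition in `Fin d`). -/
noncomputable def Disp (d : ℕ) (j k : Fin d) : Matrix (Fin d) (Fin d) ℂ :=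
  Matrix.of fun a b =>
    Complex.exp (Real.pi * Complex.I * (j : ℕ) * (k : ℕ) / d) *
    Complex.exp (2 * Real.pi * Complex.I * (j : ℕ) * (b : ℕ) / d) *
    (if a = k + b then 1 else 0)

lemma expRI (x : ℝ) : Complex.exp ((x:ℂ)*Complex.I) =
    ((Real.cos x : ℝ) : ℂ) + ((Real.sin x : ℝ) : ℂ) * Complex.I := by
  rw [Complex.exp_mul_I]; push_cast [Complex.cos_ofReal_re, Complex.sin_ofReal_re]; simp

lemma exp23 : Complex.exp (2*(Real.pi:ℂ)*Complex.I/3) =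
    ((-1/2 : ℝ) : ℂ) + ((Real.sqrt 3 / 2 : ℝ) : ℂ) * Complex.I := by
  rw [show 2*(Real.pi:ℂ)*Complex.I/3 = ((2*Real.pi/3 : ℝ):ℂ)*Complex.I by push_cast; ring,
    expRI, show 2*Real.pi/3 = Real.pi - Real.pi/3 by ring,
    Real.cos_pi_sub, Real.sin_pi_sub, Real.cos_pi_div_three, Real.sin_pi_div_three]
  norm_num

lemma exp43 : Complex.exp (2*(Real.pi:ℂ)*Complex.I*2/3) =
    ((-1/2 : ℝ) : ℂ) - ((Real.sqrt 3 / 2 : ℝ) : ℂ) * Complex.I := by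
  rw [show 2*(Real.pi:ℂ)*Complex.I*2/3 = ((2*Real.pi - 2*Real.pi/3 : ℝ):ℂ)*Complex.I by push_cast; ring,
    expRI, Real.cos_two_pi_sub, Real.sin_two_pi_sub,
    show 2*Real.pi/3 = Real.pi - Real.pi/3 by ring,
    Real.cos_pi_sub, Real.sin_pi_sub, Real.cos_pi_div_three, Real.sin_pi_div_three]
  push_cast; ring

lemma absexp1 (z : ℂ) (x : ℝ) (h : z = (x:ℂ) * Complex.I) :
    ‖Complex.exp z‖ = 1 := by
  rw [h]; exact Complex.norm_exp_ofReal_mul_I x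

lemma he (θ : ℝ) : (starRingEnd ℂ) (Complex.exp (↑θ*Complex.I)) * Complex.exp (↑θ*Complex.I) = 1 := by
  rw [← Complex.exp_conj, ← Complex.exp_add]
  simp

lemma sqrt2sq : ((Real.sqrt 2 : ℝ):ℂ)⁻¹ * ((Real.sqrt 2 : ℝ):ℂ)⁻¹ = ((2:ℝ):ℂ)⁻¹ := by
  rw [← mul_inv]; norm_cast; rw [Real.mul_self_sqrt (by norm_num)]

lemma habs2 : (|Real.sqrt 2|⁻¹ * |Real.sqrt 2|⁻¹)^2 = (4:ℝ)⁻¹ := by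
  rw [abs_of_nonneg (Real.sqrt_nonneg 2), ← mul_inv, Real.mul_self_sqrt (by norm_num)]
  norm_num

/-- in d = 3, for any θ the vector (1/√2)(1, e^{iθ}, 0) is a SIC
fiducial for the Weyl–Heisenberg group: |⟨φ_θ|D_{jk}φ_θ⟩|² = 1/4 for all
(j,k) ≠ (0,0). -/
theorem qutrit_sic_fiducial (θ : ℝ)
    (φ : Fin 3 → ℂ)
    (hφ : φ = ![(((Real.sqrt 2)⁻¹ : ℝ) : ℂ),
      Complex.exp (θ * Complex.I) * (((Real.sqrt 2)⁻¹ : ℝ) : ℂ), 0]) :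
    ∀ j k : Fin 3, (j, k) ≠ (0, 0) →
      (‖star φ ⬝ᵥ (Disp 3 j k).mulVec φ‖)^2 = 1 / 4 := by
  intro j k hjk
  subst hφ
  have h3 : Real.sqrt 3 * Real.sqrt 3 = 3 := Real.mul_self_sqrt (by norm_num)
  fin_cases j <;> fin_cases k <;>
    simp [Disp, Matrix.mulVec, dotProduct, Fin.sum_univ_three]
  -- case (0,0): contradiction
  · exact absurd rfl hjk
  -- case (0,1)
  · exact habs2
  -- case (0,2)
  · exact habs2
  -- case (1,0)
  · rw [show ((Real.sqrt 2 : ℝ):ℂ)⁻¹ * (↑(Real.sqrt 2))⁻¹ +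
        (starRingEnd ℂ) (Complex.exp (↑θ * Complex.I)) * (↑(Real.sqrt 2))⁻¹ *
          (Complex.exp (2 * ↑Real.pi * Complex.I / 3) * (Complex.exp (↑θ * Complex.I) * (↑(Real.sqrt 2))⁻¹)) =
        ((Real.sqrt 2:ℝ):ℂ)⁻¹ * (↑(Real.sqrt 2))⁻¹ * (1 + Complex.exp (2 * ↑Real.pi * Complex.I / 3)) from by
          linear_combination ((Real.sqrt 2:ℝ):ℂ)⁻¹ * (↑(Real.sqrt 2))⁻¹ *
            Complex.exp (2 * ↑Real.pi * Complex.I / 3) * he θ,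
      sqrt2sq, exp23,
      show ((2:ℝ):ℂ)⁻¹ * (1 + (((-1/2 : ℝ) : ℂ) + ((Real.sqrt 3 / 2 : ℝ) : ℂ) * Complex.I)) =
        ((1/4 : ℝ):ℂ) + ((Real.sqrt 3/4 : ℝ):ℂ) * Complex.I from by push_cast; ring,
      Complex.sq_norm, Complex.normSq_apply]
    simp
    nlinarith [h3]
  -- case (1,1)
  · rw [absexp1 _ (Real.pi/3) (by push_cast; ring)]
    simpa using habs2
  -- case (1,2)
  · rw [absexp1 _ (Real.pi*2/3) (by push_cast; ring),
      absexp1 _ (2*Real.pi/3) (by push_cast; ring)]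
    simpa using habs2
  -- case (2,0)
  · rw [show ((Real.sqrt 2 : ℝ):ℂ)⁻¹ * (↑(Real.sqrt 2))⁻¹ +
        (starRingEnd ℂ) (Complex.exp (↑θ * Complex.I)) * (↑(Real.sqrt 2))⁻¹ *
          (Complex.exp (2 * ↑Real.pi * Complex.I * 2 / 3) * (Complex.exp (↑θ * Complex.I) * (↑(Real.sqrt 2))⁻¹)) =
        ((Real.sqrt 2:ℝ):ℂ)⁻¹ * (↑(Real.sqrt 2))⁻¹ * (1 + Complex.exp (2 * ↑Real.pi * Complex.I * 2 / 3)) from by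
          linear_combination ((Real.sqrt 2:ℝ):ℂ)⁻¹ * (↑(Real.sqrt 2))⁻¹ *
            Complex.exp (2 * ↑Real.pi * Complex.I * 2 / 3) * he θ,
      sqrt2sq, exp43,
      show ((2:ℝ):ℂ)⁻¹ * (1 + (((-1/2 : ℝ) : ℂ) - ((Real.sqrt 3 / 2 : ℝ) : ℂ) * Complex.I)) =
        ((1/4 : ℝ):ℂ) - ((Real.sqrt 3/4 : ℝ):ℂ) * Complex.I from by push_cast; ring,
      Complex.sq_norm, Complex.normSq_apply]
    simp
    nlinarith [h3]
  -- case (2,1)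
  · rw [absexp1 _ (Real.pi*2/3) (by push_cast; ring)]
    simpa using habs2
  -- case (2,2)
  · rw [absexp1 _ (Real.pi*2*2/3) (by push_cast; ring),
      absexp1 _ (2*Real.pi*2/3) (by push_cast; ring)]
    simpa using habs2
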